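/- Let T be a forest with v, v_1,...,v_n, T', T'' as in the recursive setup. Then the top total Betti number satisfies: β_{pd(T)}(T) = β_{pd(T')}(T') if pd(T') > n + pd(T''); β_{pd(T)}(T) = β_{pd(T'')}(T'') if pd(T') < n + pd(T''); and β_{pd(T)}(T) = β_{pd(T')}(T') + β_{pd(T'')}(T'') if pd(T') = n + pd(T''). -/

import Mathlib

open Finset

/-- An abstract simplicial complex on ambient vertex type `U`:
a downward-closed set of finite subsets of `U`. -/
structure SComplex (U : Type*) where
  faces : Set (Finset U)
  down_closed : ∀ {s t : Finset U}, s ∈ faces → t ⊆ s → t ∈ faces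

namespace SComplex

/-- An auxiliary (arbitrary) linear order on any type, used to fix orientations. -/
noncomputable def auxOrder (U : Type*) : LinearOrder U :=
  letI : DecidableRel (WellOrderingRel (α := U)) := fun _ _ => Classical.propDecidable _
  linearOrderOfSTO WellOrderingRel

/-- The simplicial boundary operator on formal `K`-linear combinations of finite
subsets of `U` (a finite set of cardinality `n+1` is regarded as an `n`-simplex). -/
noncomputable def bdry (K U : Type*) [Field K] : (Finset U →₀ K) →ₗ[K] (Finset U →₀ K) :=
  letI := Classical.decEq U
  letI := auxOrder U
  Finsupp.lsum K fun s => LinearMap.toSpanSingleton K _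
    (∑ v ∈ s, ((-1 : K) ^ ({w ∈ s | w < v}).card) • Finsupp.single (s.erase v) (1 : K))

/-- The space of simplicial `n`-chains of a complex (with `n : ℤ`; the empty face is a
`(-1)`-chain, so that the associated homology is *reduced* homology). -/
noncomputable def chains (K : Type*) [Field K] {U : Type*} (Δ : SComplex U) (n : ℤ) :
    Submodule K (Finset U →₀ K) :=
  Submodule.span K {f | ∃ s ∈ Δ.faces, (s.card : ℤ) = n + 1 ∧ f = Finsupp.single s (1 : K)}

/-- The dimension over `K` of the `n`-th reduced simplicial homology of `Δ`
with coefficients in the field `K`. -/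
noncomputable def rhd (K : Type*) [Field K] {U : Type*} (Δ : SComplex U) (n : ℤ) : ℕ :=
  Module.finrank K ↥(Δ.chains K n ⊓ LinearMap.ker (bdry K U))
    - Module.finrank K ↥((Δ.chains K (n + 1)).map (bdry K U))

/-- The restriction (induced subcomplex) of `Δ` to a subset `W` of its vertices. -/
def restrict {U : Type*} (Δ : SComplex U) (W : Finset U) : SComplex U where
  faces := {s | s ∈ Δ.faces ∧ s ⊆ W}
  down_closed := fun hs hts => ⟨Δ.down_closed hs.1 hts, hts.trans hs.2⟩

/-- The vertex set of a complex, as a `Finset`. -/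
noncomputable def vertexFinset {U : Type*} [Fintype U] (Δ : SComplex U) : Finset U :=
  (Set.toFinite {u : U | {u} ∈ Δ.faces}).toFinset

/-- The graded Betti numbers `β_{i,d}` of the Stanley-Reisner ring `K[Δ]` over the
polynomial ring on the vertices of `Δ`, given by Hochster's formula, with the
conventions `β_{0,d} = δ_{d,0}` and `β_{i,d} = 0` for `i < 0` or `d < 0`. -/
noncomputable def betti (K : Type*) [Field K] {U : Type*} [Fintype U] (Δ : SComplex U)
    (i d : ℤ) : ℕ :=
  if d < 0 then 0 else
    ∑ W ∈ Δ.vertexFinset.powersetCard d.toNat, rhd K (Δ.restrict W) (d - i - 1)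

/-- The total Betti numbers `β_i = Σ_d β_{i,d}`. -/
noncomputable def totalBetti (K : Type*) [Field K] {U : Type*} [Fintype U] (Δ : SComplex U)
    (i : ℤ) : ℕ :=
  ∑ d ∈ Finset.range (Fintype.card U + 1), betti K Δ i (d : ℤ)

/-- The projective dimension of the Stanley-Reisner ring `K[Δ]` over the polynomial ring
on the vertices of `Δ`: the largest `i` with `β_i(Δ) ≠ 0`. -/
noncomputable def pd (K : Type*) [Field K] {U : Type*} [Fintype U] (Δ : SComplex U) : ℕ :=
  sSup {i : ℕ | totalBetti K Δ (i : ℤ) ≠ 0}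

/-- The join of two simplicial complexes. -/
def join {U : Type*} [DecidableEq U] (Δ₁ Δ₂ : SComplex U) : SComplex U where
  faces := {s | ∃ t ∈ Δ₁.faces, ∃ u ∈ Δ₂.faces, s = t ∪ u}
  down_closed := by
    rintro s s' ⟨t, ht, u, hu, rfl⟩ hsub
    refine ⟨s' ∩ t, Δ₁.down_closed ht inter_subset_right,
      s' ∩ u, Δ₂.down_closed hu inter_subset_right, ?_⟩
    ext x
    simp only [Finset.mem_union, Finset.mem_inter]
    constructor
    · intro hx
      rcases Finset.mem_union.1 (hsub hx) with h | h
      · exact Or.inl ⟨hx, h⟩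
      · exact Or.inr ⟨hx, h⟩
    · rintro (⟨h, -⟩ | ⟨h, -⟩) <;> exact h

/-- The intersection of two simplicial complexes. -/
def inter {U : Type*} (Δ₁ Δ₂ : SComplex U) : SComplex U where
  faces := Δ₁.faces ∩ Δ₂.faces
  down_closed := fun hs hts => ⟨Δ₁.down_closed hs.1 hts, Δ₂.down_closed hs.2 hts⟩

/-- The Alexander dual `Δ* = {F ⊆ V(Δ) | V(Δ) \ F ∉ Δ}` of a simplicial complex. -/
def dual {U : Type*} [Fintype U] [DecidableEq U] (Δ : SComplex U) : SComplex U where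
  faces := {F | F ⊆ Δ.vertexFinset ∧ Δ.vertexFinset \ F ∉ Δ.faces}
  down_closed := fun {s t} hs hts =>
    ⟨hts.trans hs.1, fun h => hs.2 (Δ.down_closed h (sdiff_subset_sdiff (le_refl _) hts))⟩

/-- The link of a face `F` in a simplicial complex. -/
def link {U : Type*} [DecidableEq U] (Δ : SComplex U) (F : Finset U) : SComplex U where
  faces := {s | s ∪ F ∈ Δ.faces ∧ Disjoint s F}
  down_closed := fun {s t} hs hts =>
    ⟨Δ.down_closed hs.1 (Finset.union_subset_union_left hts), hs.2.mono_left hts⟩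

/-- The simplicial complex `ε(a₁, …, aₛ; V)` whose maximal faces are the sets
`V \ aᵢ` (for a family `a : ι → Finset U` of subsets of a finite set `V`). -/
def eps {U : Type*} {ι : Type*} [DecidableEq U] (a : ι → Finset U) (V : Finset U) :
    SComplex U where
  faces := {s | ∃ i, s ⊆ V \ a i}
  down_closed := fun {s t} hs hts => hs.imp fun _ hi => hts.trans hi

end SComplex

open SComplex

/-- The independence complex `Δ(G)` of a simple graph: faces are the independent sets. -/
def indepComplex {V : Type*} (G : SimpleGraph V) : SComplex V where
  faces := {s | ∀ u ∈ s, ∀ w ∈ s, ¬ G.Adj u w}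
  down_closed := fun hs hts u hu w hw => hs u (hts hu) w (hts hw)

/-- The graded Betti numbers `β^K_{i,d}(G)` of `K[V(G)]/I(G)`, where `I(G)` is the
edge ideal of `G`. -/
noncomputable def bettiG (K : Type*) [Field K] {V : Type*} [Fintype V] (G : SimpleGraph V)
    (i d : ℤ) : ℕ :=
  betti K (indepComplex G) i d

/-- The total Betti numbers `β^K_i(G) = Σ_d β^K_{i,d}(G)` of the edge ideal quotient. -/
noncomputable def totalBettiG (K : Type*) [Field K] {V : Type*} [Fintype V] (G : SimpleGraph V)
    (i : ℤ) : ℕ :=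
  totalBetti K (indepComplex G) i

/-- The projective dimension `pd^K(G)` of `K[V(G)]/I(G)` over `K[V(G)]`. -/
noncomputable def pdG (K : Type*) [Field K] {V : Type*} [Fintype V] (G : SimpleGraph V) : ℕ :=
  pd K (indepComplex G)


namespace Skel
open SComplex

variable (K : Type*) [Field K] {U : Type*}

noncomputable def sgn (x : U) (s : Finset U) : K :=
  letI := Classical.decEq U
  letI := auxOrder U
  (-1 : K) ^ ({w ∈ s | w < x}).card

lemma sgn_sq (x : U) (s : Finset U) : sgn K x s * sgn K x s = 1 := by
  classical
  letI := auxOrder U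
  simp only [sgn, ← pow_add]
  exact Even.neg_one_pow (by simp)

lemma sgn_ne_zero (x : U) (s : Finset U) : sgn K x s ≠ 0 := by
  intro h
  have := sgn_sq K x s
  rw [h, mul_zero] at this
  exact zero_ne_one this

lemma sgn_erase_self [DecidableEq U] (x : U) (s : Finset U) :
    sgn K x (s.erase x) = sgn K x s := by
  classical
  letI := auxOrder U
  simp only [sgn]
  congr 1
  rw [Finset.filter_erase]
  refine congrArg card (Finset.erase_eq_of_notMem (by simp))

lemma sgn_insert_self [DecidableEq U] (x : U) (s : Finset U) :
    sgn K x (insert x s) = sgn K x s := by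
  classical
  letI := auxOrder U
  simp only [sgn]
  congr 1
  refine congrArg card ?_
  rw [Finset.filter_insert, if_neg (by exact lt_irrefl x)]

lemma sgn_swap [DecidableEq U] {v x : U} (s : Finset U) (hvx : v ≠ x) (hxs : x ∉ s)
    (hvs : v ∈ s) :
    sgn K v (insert x s) * sgn K x s = -(sgn K v s * sgn K x (s.erase v)) := by
  classical
  letI := auxOrder U
  simp only [sgn]
  rcases lt_or_gt_of_ne (Ne.symm hvx) with hlt | hlt
  · -- x < v
    have h1 : {w ∈ insert x s | w < v} = insert x {w ∈ s | w < v} := by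
      rw [Finset.filter_insert, if_pos hlt]
    have h2 : ({w ∈ s | w < x}).erase v = {w ∈ s | w < x} :=
      Finset.erase_eq_of_notMem (by
        simp only [Finset.mem_filter, not_and]
        intro _
        exact not_lt_of_gt hlt)
    rw [h1, Finset.card_insert_of_notMem (by simp [hxs]), Finset.filter_erase, h2, pow_succ]
    ring
  · -- v < x
    have hvf : v ∈ {w ∈ s | w < x} := by simp [hvs, hlt]
    obtain ⟨c, hc⟩ : ∃ c, ({w ∈ s | w < x}).card = c + 1 :=
      ⟨_, (Nat.succ_pred_eq_of_pos (Finset.card_pos.2 ⟨v, hvf⟩)).symm⟩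
    have h1 : {w ∈ insert x s | w < v} = {w ∈ s | w < v} := by
      rw [Finset.filter_insert, if_neg (not_lt_of_gt hlt)]
    have h2 : (({w ∈ s | w < x}).erase v).card = c := by
      rw [Finset.card_erase_of_mem hvf, hc]
      rfl
    rw [h1, Finset.filter_erase, h2, hc, pow_succ]
    ring

lemma bdry_single [DecidableEq U] (s : Finset U) :
    bdry K U (Finsupp.single s 1) =
      ∑ v ∈ s, sgn K v s • Finsupp.single (s.erase v) (1 : K) := by
  classical
  simp [bdry, sgn, Finsupp.lsum_single, LinearMap.toSpanSingleton_apply]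
  congr!

noncomputable def coneOp (x : U) : (Finset U →₀ K) →ₗ[K] (Finset U →₀ K) :=
  letI := Classical.decEq U
  Finsupp.lsum K fun s => LinearMap.toSpanSingleton K _
    (if x ∈ s then 0 else sgn K x s • Finsupp.single (insert x s) (1 : K))

noncomputable def capOp (x : U) : (Finset U →₀ K) →ₗ[K] (Finset U →₀ K) :=
  letI := Classical.decEq U
  Finsupp.lsum K fun s => LinearMap.toSpanSingleton K _
    (if x ∈ s then sgn K x s • Finsupp.single (s.erase x) (1 : K) else 0)

lemma coneOp_single [DecidableEq U] (x : U) (s : Finset U) :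
    coneOp K x (Finsupp.single s 1) =
      if x ∈ s then 0 else sgn K x s • Finsupp.single (insert x s) (1 : K) := by
  classical
  simp [coneOp, Finsupp.lsum_single, LinearMap.toSpanSingleton_apply]
  congr!

lemma capOp_single [DecidableEq U] (x : U) (s : Finset U) :
    capOp K x (Finsupp.single s 1) =
      if x ∈ s then sgn K x s • Finsupp.single (s.erase x) (1 : K) else 0 := by
  classical
  simp [capOp, Finsupp.lsum_single, LinearMap.toSpanSingleton_apply]
  congr!

/-- `∂ ∘ Cₓ + Cₓ ∘ ∂ = 1` on basis vectors. -/
lemma hom_single [DecidableEq U] (x : U) (s : Finset U) :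
    bdry K U (coneOp K x (Finsupp.single s (1 : K)))
      + coneOp K x (bdry K U (Finsupp.single s 1)) = Finsupp.single s 1 := by
  classical
  by_cases hx : x ∈ s
  · rw [coneOp_single, if_pos hx, map_zero, zero_add, bdry_single, map_sum]
    rw [Finset.sum_eq_single_of_mem x hx (fun v hv hvx => by
      rw [map_smul, coneOp_single, if_pos (Finset.mem_erase.2 ⟨Ne.symm hvx, hx⟩), smul_zero])]
    rw [map_smul, coneOp_single, if_neg (Finset.notMem_erase x s), sgn_erase_self,
      Finset.insert_erase hx, smul_smul, sgn_sq, one_smul]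
  · rw [coneOp_single, if_neg hx, map_smul, bdry_single, Finset.sum_insert hx,
      Finset.erase_insert hx, sgn_insert_self, smul_add, smul_smul, sgn_sq, one_smul]
    have h2 : coneOp K x (bdry K U (Finsupp.single s (1 : K)))
        = ∑ v ∈ s, (sgn K v s * sgn K x (s.erase v)) • Finsupp.single (insert x (s.erase v)) (1 : K) := by
      rw [bdry_single, map_sum]
      refine Finset.sum_congr rfl fun v hv => ?_
      rw [map_smul, coneOp_single,
        if_neg (fun h => hx (Finset.mem_of_mem_erase h)), smul_smul]
    have h1 : sgn K x s • ∑ v ∈ s, sgn K v (insert x s) • Finsupp.single ((insert x s).erase v) (1 : K)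
        = ∑ v ∈ s, (sgn K x s * sgn K v (insert x s)) • Finsupp.single (insert x (s.erase v)) (1 : K) := by
      rw [Finset.smul_sum]
      refine Finset.sum_congr rfl fun v hv => ?_
      rw [Finset.erase_insert_of_ne (fun h => hx (by rw [h]; exact hv)), smul_smul]
    rw [h2, h1, add_assoc, ← Finset.sum_add_distrib]
    have h3 : ∀ v ∈ s, (sgn K x s * sgn K v (insert x s)) • Finsupp.single (insert x (s.erase v)) (1 : K)
        + (sgn K v s * sgn K x (s.erase v)) • Finsupp.single (insert x (s.erase v)) (1 : K) = 0 := by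
      intro v hv
      rw [← add_smul]
      have := sgn_swap K s (fun h => hx (by rw [← h]; exact hv)) hx hv
      rw [mul_comm] at this
      rw [this, neg_add_cancel, zero_smul]
    rw [Finset.sum_congr rfl h3, Finset.sum_const_zero, add_zero]

/-- `∂ ∘ Cₓ + Cₓ ∘ ∂ = 1`. -/
lemma bdry_coneOp (x : U) (f : Finset U →₀ K) :
    bdry K U (coneOp K x f) + coneOp K x (bdry K U f) = f := by
  classical
  induction f using Finsupp.induction_linear with
  | zero => simp
  | add a b ha hb =>
      rw [map_add, map_add, map_add, map_add]
      rw [show ∀ (p q r t : Finset U →₀ K), p + q + (r + t) = (p + r) + (q + t) by intros; abel]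
      rw [ha, hb]
  | single s a =>
      have : (Finsupp.single s a : Finset U →₀ K) = a • Finsupp.single s 1 := by
        rw [Finsupp.smul_single, smul_eq_mul, mul_one]
      rw [this, map_smul, map_smul, map_smul, map_smul, ← smul_add, hom_single, ]



lemma sgn_swap' [DecidableEq U] {v x : U} (s : Finset U) (hvx : v ≠ x) (hx : x ∈ s)
    (hv : v ∈ s) :
    sgn K x s * sgn K v (s.erase x) = -(sgn K v s * sgn K x (s.erase v)) := by
  classical
  have h := sgn_swap K (s.erase x) hvx (Finset.notMem_erase x s)
    (Finset.mem_erase.2 ⟨hvx, hv⟩)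
  rw [Finset.insert_erase hx, sgn_erase_self, Finset.erase_right_comm, sgn_erase_self] at h
  have hA := sgn_sq K v s
  have hC := sgn_sq K v (s.erase x)
  linear_combination (sgn K v s * sgn K v (s.erase x)) * h
    - (sgn K x s * sgn K v (s.erase x)) * hA - (sgn K v s * sgn K x (s.erase v)) * hC

/-- `∂ ∘ Eₓ + Eₓ ∘ ∂ = 0` on basis vectors. -/
lemma anticomm_single [DecidableEq U] (x : U) (s : Finset U) :
    bdry K U (capOp K x (Finsupp.single s (1 : K)))
      + capOp K x (bdry K U (Finsupp.single s 1)) = 0 := by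
  classical
  by_cases hx : x ∈ s
  · rw [capOp_single, if_pos hx, map_smul, bdry_single, bdry_single, map_sum]
    have h2 : ∀ v ∈ s, capOp K x (sgn K v s • Finsupp.single (s.erase v) (1 : K))
        = if v = x then 0
          else (sgn K v s * sgn K x (s.erase v)) • Finsupp.single ((s.erase v).erase x) (1 : K) := by
      intro v hv
      rw [map_smul, capOp_single]
      by_cases hvx : v = x
      · subst hvx; rw [if_neg (Finset.notMem_erase v s), smul_zero, if_pos rfl]
      · rw [if_pos (Finset.mem_erase.2 ⟨fun h => hvx h.symm, hx⟩), if_neg hvx, smul_smul]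
    rw [Finset.sum_congr rfl h2, Finset.sum_ite, Finset.sum_const_zero, zero_add]
    have h3 : {v ∈ s | ¬ v = x} = s.erase x := by
      ext a; simp [Finset.mem_erase, and_comm]
    rw [h3, Finset.smul_sum, ← Finset.sum_add_distrib]
    refine Finset.sum_eq_zero fun v hv => ?_
    obtain ⟨hvx, hvs⟩ := Finset.mem_erase.1 hv
    rw [smul_smul, Finset.erase_right_comm (a := v), ← add_smul,
      sgn_swap' K s hvx hx hvs, neg_add_cancel, zero_smul]
  · rw [capOp_single, if_neg hx, map_zero, zero_add, bdry_single, map_sum]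
    refine Finset.sum_eq_zero fun v hv => ?_
    rw [map_smul, capOp_single, if_neg (fun h => hx (Finset.mem_of_mem_erase h)), smul_zero]

lemma anticomm (x : U) (f : Finset U →₀ K) :
    bdry K U (capOp K x f) + capOp K x (bdry K U f) = 0 := by
  classical
  induction f using Finsupp.induction_linear with
  | zero => simp
  | add a b ha hb =>
      rw [map_add, map_add, map_add, map_add,
        show ∀ (p q r t : Finset U →₀ K), p + q + (r + t) = (p + r) + (q + t) by intros; abel,
        ha, hb, add_zero]
  | single s a =>
      have : (Finsupp.single s a : Finset U →₀ K) = a • Finsupp.single s 1 := by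
        rw [Finsupp.smul_single, smul_eq_mul, mul_one]
      rw [this, map_smul, map_smul, map_smul, map_smul, ← smul_add, anticomm_single, smul_zero]

lemma capOp_coneOp_single [DecidableEq U] {x : U} {s : Finset U} (hx : x ∉ s) :
    capOp K x (coneOp K x (Finsupp.single s (1 : K))) = Finsupp.single s 1 := by
  classical
  rw [coneOp_single, if_neg hx, map_smul, capOp_single, if_pos (Finset.mem_insert_self x s),
    sgn_insert_self, Finset.erase_insert hx, smul_smul, sgn_sq, one_smul]

lemma coneOp_capOp_single [DecidableEq U] {x : U} {s : Finset U} (hx : x ∈ s) :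
    coneOp K x (capOp K x (Finsupp.single s (1 : K))) = Finsupp.single s 1 := by
  classical
  rw [capOp_single, if_pos hx, map_smul, coneOp_single, if_neg (Finset.notMem_erase x s),
    sgn_erase_self, Finset.insert_erase hx, smul_smul, sgn_sq, one_smul]

lemma capOp_coneOp_ne_single [DecidableEq U] {p u : U} (hpu : p ≠ u) {s : Finset U}
    (hp : p ∉ s) :
    capOp K p (coneOp K u (Finsupp.single s (1 : K))) = 0 := by
  classical
  rw [coneOp_single]
  by_cases hu : u ∈ s
  · rw [if_pos hu, map_zero]
  · rw [if_neg hu, map_smul, capOp_single,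
      if_neg (by simp [Finset.mem_insert, hp, hpu] ), smul_zero]

lemma bdry_bdry_single [DecidableEq U] (s : Finset U) :
    bdry K U (bdry K U (Finsupp.single s (1 : K))) = 0 := by
  classical
  induction s using Finset.strongInductionOn with
  | _ s IH =>
    rcases s.eq_empty_or_nonempty with rfl | ⟨x, hx⟩
    · rw [bdry_single]; simp
    · have hs : Finsupp.single s (1 : K)
          = sgn K x (s.erase x) • coneOp K x (Finsupp.single (s.erase x) 1) := by
        rw [coneOp_single, if_neg (Finset.notMem_erase x s), smul_smul, sgn_sq, one_smul,
          Finset.insert_erase hx]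
      rw [hs, map_smul, map_smul]
      have e1 : bdry K U (coneOp K x (Finsupp.single (s.erase x) (1 : K)))
          = Finsupp.single (s.erase x) 1
            - coneOp K x (bdry K U (Finsupp.single (s.erase x) 1)) :=
        eq_sub_of_add_eq (bdry_coneOp K x _)
      have e2 : bdry K U (coneOp K x (bdry K U (Finsupp.single (s.erase x) (1 : K))))
          = bdry K U (Finsupp.single (s.erase x) 1)
            - coneOp K x (bdry K U (bdry K U (Finsupp.single (s.erase x) 1))) :=
        eq_sub_of_add_eq (bdry_coneOp K x _)
      rw [e1, map_sub, e2, IH _ (Finset.erase_ssubset hx), map_zero, sub_zero, sub_self,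
        smul_zero]

lemma bdry_bdry (f : Finset U →₀ K) : bdry K U (bdry K U f) = 0 := by
  classical
  induction f using Finsupp.induction_linear with
  | zero => simp
  | add a b ha hb => rw [map_add, map_add, ha, hb, add_zero]
  | single s a =>
      have : (Finsupp.single s a : Finset U →₀ K) = a • Finsupp.single s 1 := by
        rw [Finsupp.smul_single, smul_eq_mul, mul_one]
      rw [this, map_smul, map_smul, bdry_bdry_single, smul_zero]



noncomputable def fchains (F : Set (Finset U)) (n : ℤ) : Submodule K (Finset U →₀ K) :=
  Submodule.span K {f | ∃ s ∈ F, (s.card : ℤ) = n + 1 ∧ f = Finsupp.single s (1 : K)}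

lemma chains_eq_fchains (Δ : SComplex U) (n : ℤ) : Δ.chains K n = fchains K Δ.faces n := rfl

lemma single_mem_fchains {F : Set (Finset U)} {s : Finset U} (hs : s ∈ F) {n : ℤ}
    (hc : (s.card : ℤ) = n + 1) : Finsupp.single s (1 : K) ∈ fchains K F n :=
  Submodule.subset_span ⟨s, hs, hc, rfl⟩

lemma map_fchains_le {N : Type*} [AddCommGroup N] [Module K N]
    {F : Set (Finset U)} {n : ℤ} (f : (Finset U →₀ K) →ₗ[K] N)
    (Q : Submodule K N)
    (h : ∀ s ∈ F, (s.card : ℤ) = n + 1 → f (Finsupp.single s 1) ∈ Q) :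
    (fchains K F n).map f ≤ Q := by
  rw [fchains, Submodule.map_span, Submodule.span_le]
  rintro _ ⟨g, ⟨s, hs, hc, rfl⟩, rfl⟩
  exact h s hs hc

lemma apply_mem_of_mem_fchains {F : Set (Finset U)} {n : ℤ}
    {f : (Finset U →₀ K) →ₗ[K] (Finset U →₀ K)} {Q : Submodule K (Finset U →₀ K)}
    (h : ∀ s ∈ F, (s.card : ℤ) = n + 1 → f (Finsupp.single s 1) ∈ Q)
    {x : Finset U →₀ K} (hx : x ∈ fchains K F n) : f x ∈ Q :=
  map_fchains_le K f Q h (Submodule.mem_map_of_mem hx)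

lemma fchains_mono {F F' : Set (Finset U)} (h : F ⊆ F') (n : ℤ) :
    fchains K F n ≤ fchains K F' n :=
  Submodule.span_mono (fun f ⟨s, hs, hc, he⟩ => ⟨s, h hs, hc, he⟩)

lemma fchains_eq_bot {F : Set (Finset U)} {n : ℤ} (hn : n < -1) : fchains K F n = ⊥ := by
  rw [fchains, Submodule.span_eq_bot]
  rintro f ⟨s, hs, hc, rfl⟩
  exfalso
  omega

lemma map_bdry_fchains [DecidableEq U] {F F' : Set (Finset U)} (hF : ∀ s ∈ F, ∀ v ∈ s, s.erase v ∈ F')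
    (n : ℤ) : (fchains K F n).map (bdry K U) ≤ fchains K F' (n - 1) := by
  classical
  refine map_fchains_le K _ _ fun s hs hc => ?_
  rw [bdry_single]
  refine Submodule.sum_mem _ fun v hv => Submodule.smul_mem _ _ ?_
  refine single_mem_fchains K (hF s hs v hv) ?_
  rw [Finset.card_erase_of_mem hv]
  have : 1 ≤ s.card := Finset.card_pos.2 ⟨v, hv⟩
  push_cast [this]
  all_goals omega

lemma map_coneOp_fchains [DecidableEq U] {F F' : Set (Finset U)} {x : U}
    (hF : ∀ s ∈ F, x ∉ s → insert x s ∈ F') (n : ℤ) :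
    (fchains K F n).map (coneOp K x) ≤ fchains K F' (n + 1) := by
  classical
  refine map_fchains_le K _ _ fun s hs hc => ?_
  rw [coneOp_single]
  by_cases hx : x ∈ s
  · rw [if_pos hx]; exact Submodule.zero_mem _
  · rw [if_neg hx]
    refine Submodule.smul_mem _ _ (single_mem_fchains K (hF s hs hx) ?_)
    rw [Finset.card_insert_of_notMem hx]
    push_cast
    all_goals omega

lemma map_capOp_fchains [DecidableEq U] {F F' : Set (Finset U)} {x : U}
    (hF : ∀ s ∈ F, x ∈ s → s.erase x ∈ F') (n : ℤ) :
    (fchains K F n).map (capOp K x) ≤ fchains K F' (n - 1) := by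
  classical
  refine map_fchains_le K _ _ fun s hs hc => ?_
  rw [capOp_single]
  by_cases hx : x ∈ s
  · rw [if_pos hx]
    refine Submodule.smul_mem _ _ (single_mem_fchains K (hF s hs hx) ?_)
    rw [Finset.card_erase_of_mem hx]
    have : 1 ≤ s.card := Finset.card_pos.2 ⟨x, hx⟩
    push_cast [this]
    all_goals omega
  · rw [if_neg hx]; exact Submodule.zero_mem _


/-- Abstract comparison of "homology dimensions" via explicit quasi-inverse chain maps. -/
lemma finrank_homology_eq {K M : Type*} [Field K] [AddCommGroup M] [Module K M]
    [Module.Finite K M] {Z1 B1 Z2 B2 : Submodule K M} (hB1 : B1 ≤ Z1) (hB2 : B2 ≤ Z2)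
    {f g : M →ₗ[K] M}
    (hf : ∀ x ∈ Z1, f x ∈ Z2) (hg : ∀ x ∈ Z2, g x ∈ Z1)
    (hfB : ∀ x ∈ B1, f x ∈ B2) (hgB : ∀ x ∈ B2, g x ∈ B1)
    (hgf : ∀ x ∈ Z1, g (f x) - x ∈ B1) (hfg : ∀ x ∈ Z2, f (g x) - x ∈ B2) :
    Module.finrank K Z1 - Module.finrank K B1
      = Module.finrank K Z2 - Module.finrank K B2 := by
  classical
  set B1' : Submodule K Z1 := B1.comap Z1.subtype with hB1'
  set B2' : Submodule K Z2 := B2.comap Z2.subtype with hB2'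
  have e1 : Module.finrank K (Z1 ⧸ B1') + Module.finrank K B1' = Module.finrank K Z1 :=
    Submodule.finrank_quotient_add_finrank B1'
  have e2 : Module.finrank K (Z2 ⧸ B2') + Module.finrank K B2' = Module.finrank K Z2 :=
    Submodule.finrank_quotient_add_finrank B2'
  have e3 : Module.finrank K B1' = Module.finrank K B1 :=
    (Submodule.comapSubtypeEquivOfLe hB1).finrank_eq
  have e4 : Module.finrank K B2' = Module.finrank K B2 :=
    (Submodule.comapSubtypeEquivOfLe hB2).finrank_eq
  -- the restricted maps
  set F : Z1 →ₗ[K] Z2 := f.restrict hf with hF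
  set G : Z2 →ₗ[K] Z1 := g.restrict hg with hG
  have hFB : B1' ≤ B2'.comap F := by
    intro x hx
    exact hfB _ hx
  have hGB : B2' ≤ B1'.comap G := by
    intro x hx
    exact hgB _ hx
  set Fq : (Z1 ⧸ B1') →ₗ[K] (Z2 ⧸ B2') := B1'.mapQ B2' F hFB with hFq
  set Gq : (Z2 ⧸ B2') →ₗ[K] (Z1 ⧸ B1') := B2'.mapQ B1' G hGB with hGq
  have hGF : Gq.comp Fq = LinearMap.id := by
    refine Submodule.linearMap_qext _ ?_
    ext x
    simp only [LinearMap.comp_apply, Submodule.mkQ_apply, hFq, hGq, Submodule.mapQ_apply,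
      LinearMap.id_apply]
    rw [Submodule.Quotient.eq]
    show G (F x) - x ∈ B1'
    have : (↑(G (F x)) : M) = g (f ↑x) := by
      simp [hF, hG, LinearMap.restrict_apply]
    show (↑(G (F x) - x) : M) ∈ B1
    rw [AddSubgroupClass.coe_sub, this]
    exact hgf _ x.2
  have hFG : Fq.comp Gq = LinearMap.id := by
    refine Submodule.linearMap_qext _ ?_
    ext x
    simp only [LinearMap.comp_apply, Submodule.mkQ_apply, hFq, hGq, Submodule.mapQ_apply,
      LinearMap.id_apply]
    rw [Submodule.Quotient.eq]
    show (↑(F (G x) - x) : M) ∈ B2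
    have : (↑(F (G x)) : M) = f (g ↑x) := by
      simp [hF, hG, LinearMap.restrict_apply]
    rw [AddSubgroupClass.coe_sub, this]
    exact hfg _ x.2
  have eq5 : Module.finrank K (Z1 ⧸ B1') = Module.finrank K (Z2 ⧸ B2') :=
    (LinearEquiv.ofLinear Fq Gq hFG hGF).finrank_eq
  omega

section RhdLayer
set_option synthInstance.maxHeartbeats 1000000
set_option maxHeartbeats 1000000

variable {U : Type*} [DecidableEq U]

lemma eqOn_fchains {F : Set (Finset U)} {n : ℤ}
    {f g : (Finset U →₀ K) →ₗ[K] (Finset U →₀ K)}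
    (h : ∀ s ∈ F, (s.card : ℤ) = n + 1 → f (Finsupp.single s 1) = g (Finsupp.single s 1))
    {x : Finset U →₀ K} (hx : x ∈ fchains K F n) : f x = g x := by
  refine LinearMap.eqOn_span ?_ hx
  rintro _ ⟨s, hs, hc, rfl⟩
  exact h s hs hc

lemma boundaries_le (Δ : SComplex U) (n : ℤ) :
    (Δ.chains K (n + 1)).map (bdry K U) ≤ Δ.chains K n ⊓ LinearMap.ker (bdry K U) := by
  refine le_inf ?_ ?_
  · have := map_bdry_fchains K (F := Δ.faces) (F' := Δ.faces)
      (fun s hs v hv => Δ.down_closed hs (Finset.erase_subset v s)) (n + 1)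
    rw [chains_eq_fchains, chains_eq_fchains]
    convert this using 2
    omega
  · rintro x ⟨y, hy, rfl⟩
    exact LinearMap.mem_ker.2 (bdry_bdry K y)

variable [Fintype U]

lemma rhd_cone (Δ : SComplex U) {x : U} (hx : ∀ s ∈ Δ.faces, insert x s ∈ Δ.faces)
    (n : ℤ) : rhd K Δ n = 0 := by
  have hZB : Δ.chains K n ⊓ LinearMap.ker (bdry K U) ≤ (Δ.chains K (n + 1)).map (bdry K U) := by
    intro z hz
    rw [Submodule.mem_inf] at hz
    obtain ⟨hz1, hz2⟩ := hz
    have h1 : coneOp K x z ∈ Δ.chains K (n + 1) := by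
      rw [chains_eq_fchains] at hz1 ⊢
      exact map_coneOp_fchains K (fun s hs _ => hx s hs) n (Submodule.mem_map_of_mem hz1)
    refine ⟨coneOp K x z, h1, ?_⟩
    have h2 := bdry_coneOp K x z
    rw [LinearMap.mem_ker.1 hz2, map_zero, add_zero] at h2
    exact h2
  have hBZ := boundaries_le K Δ n
  rw [rhd, le_antisymm hZB hBZ, Nat.sub_self]

/-- Key homology shift: `u` a leaf-companion ("cone point for the `p`-free part") and
`L` the link of `p`. -/
lemma rhd_leaf (Δ L : SComplex U) {p u : U} (hpu : p ≠ u)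
    (hcone : ∀ s ∈ Δ.faces, p ∉ s → insert u s ∈ Δ.faces)
    (hL : ∀ s : Finset U, s ∈ L.faces ↔ (p ∉ s ∧ insert p s ∈ Δ.faces))
    (hLu : ∀ s ∈ L.faces, u ∉ s)
    (n : ℤ) : rhd K Δ n = rhd K L (n - 1) := by
  have hLD : ∀ s ∈ L.faces, s ∈ Δ.faces := fun s hs =>
    Δ.down_closed ((hL s).1 hs).2 (Finset.subset_insert p s)
  have hEr : ∀ s ∈ Δ.faces, p ∈ s → s.erase p ∈ L.faces := by
    intro s hs hp
    exact (hL _).2 ⟨Finset.notMem_erase p s, by rwa [Finset.insert_erase hp]⟩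
  have hIns : ∀ s ∈ L.faces, p ∉ s → insert p s ∈ Δ.faces := fun s hs _ => ((hL s).1 hs).2
  have hLp : ∀ s ∈ L.faces, p ∉ s := fun s hs => ((hL s).1 hs).1
  have hch : ∀ (Γ : SComplex U) (m m' : ℤ), m = m' → Γ.chains K m = Γ.chains K m' :=
    fun _ _ _ h => by rw [h]
  set Z1 := Δ.chains K n ⊓ LinearMap.ker (bdry K U) with hZ1
  set B1 := (Δ.chains K (n + 1)).map (bdry K U) with hB1def
  set Z2 := L.chains K (n - 1) ⊓ LinearMap.ker (bdry K U) with hZ2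
  set B2 := (L.chains K (n - 1 + 1)).map (bdry K U) with hB2def
  set g : (Finset U →₀ K) →ₗ[K] (Finset U →₀ K) := coneOp K p - coneOp K u with hgdef
  have hB1 : B1 ≤ Z1 := boundaries_le K Δ n
  have hB2 : B2 ≤ Z2 := boundaries_le K L (n - 1)
  -- f maps Z1 to Z2
  have hf : ∀ c ∈ Z1, capOp K p c ∈ Z2 := by
    intro c hc
    rw [Submodule.mem_inf] at hc ⊢
    obtain ⟨hc1, hc2⟩ := hc
    constructor
    · exact map_capOp_fchains K (fun s hs hp => hEr s hs hp) n (Submodule.mem_map_of_mem hc1)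
    · have h2 := anticomm K p c
      rw [LinearMap.mem_ker.1 hc2, map_zero, add_zero] at h2
      exact LinearMap.mem_ker.2 h2
  have hg : ∀ z ∈ Z2, g z ∈ Z1 := by
    intro z hz
    rw [Submodule.mem_inf] at hz ⊢
    obtain ⟨hz1, hz2⟩ := hz
    have hz0 : bdry K U z = 0 := LinearMap.mem_ker.1 hz2
    constructor
    · have e1 : coneOp K p z ∈ Δ.chains K (n - 1 + 1) :=
        map_coneOp_fchains K hIns (n - 1) (Submodule.mem_map_of_mem hz1)
      have e2 : coneOp K u z ∈ Δ.chains K (n - 1 + 1) :=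
        map_coneOp_fchains K (fun s hs _ => hcone s (hLD s hs) (hLp s hs)) (n - 1)
          (Submodule.mem_map_of_mem hz1)
      rw [hch Δ (n - 1 + 1) n (by ring)] at e1 e2
      exact Submodule.sub_mem _ e1 e2
    · refine LinearMap.mem_ker.2 ?_
      have i1 := bdry_coneOp K p z
      have i2 := bdry_coneOp K u z
      rw [hz0, map_zero, add_zero] at i1 i2
      simp [hgdef, map_sub, i1, i2]
  have hfB : ∀ b ∈ B1, capOp K p b ∈ B2 := by
    rintro _ ⟨y, hy, rfl⟩
    have h1 : capOp K p y ∈ L.chains K (n + 1 - 1) :=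
      map_capOp_fchains K (fun s hs hp => hEr s hs hp) (n + 1) (Submodule.mem_map_of_mem hy)
    rw [hch L (n + 1 - 1) (n - 1 + 1) (by ring)] at h1
    have h2 := anticomm K p y
    refine ⟨-capOp K p y, Submodule.neg_mem _ h1, ?_⟩
    rw [map_neg]
    exact (eq_neg_of_add_eq_zero_right h2).symm
  have hgB : ∀ b ∈ B2, g b ∈ B1 := by
    rintro _ ⟨y, hy, rfl⟩
    have e1 : coneOp K p y ∈ Δ.chains K (n - 1 + 1 + 1) :=
      map_coneOp_fchains K hIns (n - 1 + 1) (Submodule.mem_map_of_mem hy)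
    have e2 : coneOp K u y ∈ Δ.chains K (n - 1 + 1 + 1) :=
      map_coneOp_fchains K (fun s hs _ => hcone s (hLD s hs) (hLp s hs)) (n - 1 + 1)
        (Submodule.mem_map_of_mem hy)
    rw [hch Δ (n - 1 + 1 + 1) (n + 1) (by ring)] at e1 e2
    refine ⟨coneOp K u y - coneOp K p y, Submodule.sub_mem _ e2 e1, ?_⟩
    have j1 : bdry K U (coneOp K p y) = y - coneOp K p (bdry K U y) :=
      eq_sub_of_add_eq (bdry_coneOp K p y)
    have j2 : bdry K U (coneOp K u y) = y - coneOp K u (bdry K U y) :=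
      eq_sub_of_add_eq (bdry_coneOp K u y)
    simp only [hgdef, LinearMap.sub_apply, map_sub, j1, j2]
    abel
  -- the set of p-free faces of Δ
  set PF : Set (Finset U) := {s | s ∈ Δ.faces ∧ p ∉ s} with hPF
  have hgf : ∀ c ∈ Z1, g (capOp K p c) - c ∈ B1 := by
    intro c hc
    rw [Submodule.mem_inf] at hc
    obtain ⟨hc1, hc2⟩ := hc
    have hc0 : bdry K U c = 0 := LinearMap.mem_ker.1 hc2
    set b := capOp K p c with hbdef
    have hbL : b ∈ L.chains K (n - 1) :=
      map_capOp_fchains K (fun s hs hp => hEr s hs hp) n (Submodule.mem_map_of_mem hc1)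
    have hbker : bdry K U b = 0 := by
      have h2 := anticomm K p c
      rw [hc0, map_zero, add_zero] at h2
      exact h2
    have haPF : c - coneOp K p b ∈ fchains K PF n := by
      have hmap : (LinearMap.id - coneOp K p ∘ₗ capOp K p :
          (Finset U →₀ K) →ₗ[K] (Finset U →₀ K)) c ∈ fchains K PF n := by
        refine apply_mem_of_mem_fchains K (f := LinearMap.id - coneOp K p ∘ₗ capOp K p)
          (Q := fchains K PF n) ?_ hc1
        intro s hs hcard
        simp only [LinearMap.sub_apply, LinearMap.id_apply, LinearMap.comp_apply]
        by_cases hp : p ∈ s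
        · rw [coneOp_capOp_single K hp, sub_self]
          exact Submodule.zero_mem _
        · rw [capOp_single, if_neg hp, map_zero, sub_zero]
          exact single_mem_fchains K (F := PF) (show s ∈ PF from ⟨hs, hp⟩) hcard
      simpa using hmap
    have hCub : coneOp K u b ∈ fchains K PF n := by
      have h1 : coneOp K u b ∈ fchains K PF (n - 1 + 1) :=
        map_coneOp_fchains K (F := L.faces) (F' := PF)
          (fun s hs hu => ⟨hcone s (hLD s hs) (hLp s hs), by
            simp [Finset.mem_insert, hLp s hs, hpu]⟩) (n - 1)
          (Submodule.mem_map_of_mem hbL)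
      rwa [show (n - 1 + 1 : ℤ) = n by ring] at h1
    set y := (c - coneOp K p b) + coneOp K u b with hydef
    have hyPF : y ∈ fchains K PF n := Submodule.add_mem _ haPF hCub
    have hbdyy : bdry K U y = 0 := by
      have i1 := bdry_coneOp K p b
      have i2 := bdry_coneOp K u b
      rw [hbker, map_zero, add_zero] at i1 i2
      simp only [hydef, map_add, map_sub, hc0, i1, i2]
      abel
    have hCuy : coneOp K u y ∈ Δ.chains K (n + 1) := by
      have h1 : coneOp K u y ∈ Δ.chains K (n + 1) := by
        have := map_coneOp_fchains K (F := PF) (F' := Δ.faces)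
          (fun s hs hu => hcone s hs.1 hs.2) n (Submodule.mem_map_of_mem hyPF)
        exact this
      exact h1
    have hyB : y ∈ B1 := by
      refine ⟨coneOp K u y, hCuy, ?_⟩
      have := bdry_coneOp K u y
      rw [hbdyy, map_zero, add_zero] at this
      exact this
    have : g (capOp K p c) - c = -y := by
      simp only [hgdef, LinearMap.sub_apply, hydef, hbdef]
      abel
    rw [this]
    exact Submodule.neg_mem _ hyB
  have hfg : ∀ z ∈ Z2, capOp K p (g z) - z ∈ B2 := by
    intro z hz
    rw [Submodule.mem_inf] at hz
    obtain ⟨hz1, hz2⟩ := hz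
    have e1 : (capOp K p ∘ₗ coneOp K p) z = (LinearMap.id : (Finset U →₀ K) →ₗ[K] (Finset U →₀ K)) z := by
      refine eqOn_fchains K (F := L.faces) (n := n - 1) ?_ hz1
      intro s hs hcard
      simp only [LinearMap.comp_apply, LinearMap.id_apply]
      exact capOp_coneOp_single K (hLp s hs)
    have e2 : (capOp K p ∘ₗ coneOp K u) z = (0 : (Finset U →₀ K) →ₗ[K] (Finset U →₀ K)) z := by
      refine eqOn_fchains K (F := L.faces) (n := n - 1) ?_ hz1
      intro s hs hcard
      simp only [LinearMap.comp_apply, LinearMap.zero_apply]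
      exact capOp_coneOp_ne_single K hpu (hLp s hs)
    simp only [LinearMap.comp_apply, LinearMap.id_apply, LinearMap.zero_apply] at e1 e2
    have : capOp K p (g z) - z = 0 := by
      simp only [hgdef, LinearMap.sub_apply, map_sub, e1, e2]
      abel
    rw [this]
    exact Submodule.zero_mem _
  have main := finrank_homology_eq hB1 hB2 hf hg hfB hgB hgf hfg
  exact main

end RhdLayer

section Relabel

variable {U₁ U₂ : Type*}

noncomputable def invCnt (e : U₁ → U₂) (t : Finset U₁) : ℕ :=
  letI := Classical.decEq U₁
  letI := auxOrder U₁
  letI := auxOrder U₂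
  ∑ b ∈ t, ({a ∈ t | a < b ∧ e b < e a}).card

noncomputable def invSgn (e : U₁ → U₂) (t : Finset U₁) : K := (-1 : K) ^ invCnt e t

lemma invSgn_sq (e : U₁ → U₂) (t : Finset U₁) : invSgn K e t * invSgn K e t = 1 := by
  rw [invSgn, ← pow_add]
  exact Even.neg_one_pow (by simp)

lemma invSgn_key [DecidableEq U₁] {e : U₁ → U₂} (he : Function.Injective e)
    {v : U₁} {t' : Finset U₁} (hv : v ∉ t') :
    invSgn K e (insert v t') * sgn K (e v) ((insert v t').map ⟨e, he⟩)
      = sgn K v (insert v t') * invSgn K e t' := by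
  classical
  letI := auxOrder U₁
  letI := auxOrder U₂
  set A1 := ({b ∈ t' | v < b ∧ e b < e v}).card with hA1
  set A2 := ({a ∈ t' | a < v ∧ e v < e a}).card with hA2
  set C := ({a ∈ t' | a < v ∧ e a < e v}).card with hC
  -- (1) inversion count of `insert v t'`
  have h1 : invCnt e (insert v t') = A2 + invCnt e t' + A1 := by
    rw [invCnt, Finset.sum_insert hv]
    have hv0 : ({a ∈ insert v t' | a < v ∧ e v < e a}).card = A2 := by
      rw [Finset.filter_insert, if_neg (by simp [lt_irrefl])]
    have hstep : ∀ b ∈ t', ({a ∈ insert v t' | a < b ∧ e b < e a}).card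
        = ({a ∈ t' | a < b ∧ e b < e a}).card + (if v < b ∧ e b < e v then 1 else 0) := by
      intro b hb
      rw [Finset.filter_insert]
      by_cases hcond : v < b ∧ e b < e v
      · rw [if_pos hcond, Finset.card_insert_of_notMem (by simp [hv]), if_pos hcond]
      · rw [if_neg hcond, if_neg hcond, add_zero]
    rw [hv0, Finset.sum_congr rfl hstep, Finset.sum_add_distrib, ← Finset.card_filter]
    have hrfl : invCnt e t' = ∑ b ∈ t', ({a ∈ t' | a < b ∧ e b < e a}).card := rfl
    rw [hrfl]
    omega
  -- (2) the position of `e v` in the mapped set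
  have h2 : ({w ∈ (insert v t').map ⟨e, he⟩ | w < e v}).card = C + A1 := by
    have hm : ({w ∈ (insert v t').map ⟨e, he⟩ | w < e v})
        = ((insert v t').filter (fun a => e a < e v)).map ⟨e, he⟩ := by
      ext w
      simp only [Finset.mem_filter, Finset.mem_map, Function.Embedding.coeFn_mk]
      constructor
      · rintro ⟨⟨a, ha, rfl⟩, hlt⟩; exact ⟨a, ⟨ha, hlt⟩, rfl⟩
      · rintro ⟨a, ⟨ha, hlt⟩, rfl⟩; exact ⟨⟨a, ha, rfl⟩, hlt⟩
    rw [hm, Finset.card_map, Finset.filter_insert, if_neg (by simp [lt_irrefl])]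
    -- now split `{a ∈ t' | e a < e v}` according to `a < v` or `v < a`
    have hsplit := Finset.card_filter_add_card_filter_not
      (s := t'.filter (fun a => e a < e v)) (p := fun a => a < v)
    rw [Finset.filter_filter, Finset.filter_filter] at hsplit
    have e1 : t'.filter (fun a => e a < e v ∧ a < v) = t'.filter (fun a => a < v ∧ e a < e v) := by
      apply Finset.filter_congr; intro a ha; exact ⟨fun h => ⟨h.2, h.1⟩, fun h => ⟨h.2, h.1⟩⟩
    have e2 : t'.filter (fun a => e a < e v ∧ ¬ a < v)
        = t'.filter (fun a => v < a ∧ e a < e v) := by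
      apply Finset.filter_congr; intro a ha
      have hav : a ≠ v := fun h => hv (h ▸ ha)
      constructor
      · rintro ⟨h1', h2'⟩; exact ⟨lt_of_le_of_ne (not_lt.1 h2') (Ne.symm hav), h1'⟩
      · rintro ⟨h1', h2'⟩; exact ⟨h2', not_lt.2 h1'.le⟩
    rw [e1, e2] at hsplit
    have e3 : ({b ∈ t' | v < b ∧ e b < e v}).card
        = (t'.filter (fun a => v < a ∧ e a < e v)).card := rfl
    omega
  -- (3) the position of `v`
  have h3 : ({a ∈ insert v t' | a < v}).card = C + A2 := by
    rw [Finset.filter_insert, if_neg (by simp [lt_irrefl])]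
    have hsplit := Finset.card_filter_add_card_filter_not
      (s := t'.filter (fun a => a < v)) (p := fun a => e a < e v)
    rw [Finset.filter_filter, Finset.filter_filter] at hsplit
    have e1 : t'.filter (fun a => a < v ∧ e a < e v) = t'.filter (fun a => a < v ∧ e a < e v) := rfl
    have e2 : t'.filter (fun a => a < v ∧ ¬ e a < e v)
        = t'.filter (fun a => a < v ∧ e v < e a) := by
      apply Finset.filter_congr; intro a ha
      have hav : a ≠ v := fun h => hv (h ▸ ha)
      have : e a ≠ e v := fun h => hav (he h)
      constructor
      · rintro ⟨h1', h2'⟩; exact ⟨h1', lt_of_le_of_ne (not_lt.1 h2') (Ne.symm this)⟩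
      · rintro ⟨h1', h2'⟩; exact ⟨h1', not_lt.2 h2'.le⟩
    rw [e2] at hsplit
    omega
  -- combine
  rw [invSgn, invSgn, sgn, sgn]
  rw [h2, h3, h1]  -- may need care: sgn unfolds with its own letI
  rw [← pow_add, ← pow_add]
  have : A2 + invCnt e t' + A1 + (C + A1) = (C + A2 + invCnt e t') + 2 * A1 := by ring
  rw [this, pow_add, pow_mul, neg_one_sq, one_pow, mul_one]

end Relabel

section RelabelMap

variable {U₁ U₂ : Type*}

noncomputable def diagMap (e : U₁ → U₂) : (Finset U₁ →₀ K) →ₗ[K] (Finset U₁ →₀ K) :=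
  Finsupp.lsum K fun t => LinearMap.toSpanSingleton K _ (invSgn K e t • Finsupp.single t 1)

noncomputable def relMap (e : U₁ ↪ U₂) : (Finset U₁ →₀ K) →ₗ[K] (Finset U₂ →₀ K) :=
  Finsupp.lsum K fun t =>
    LinearMap.toSpanSingleton K _ (invSgn K e t • Finsupp.single (t.map e) 1)

lemma diagMap_single (e : U₁ → U₂) (t : Finset U₁) (a : K) :
    diagMap K e (Finsupp.single t a) = (a * invSgn K e t) • Finsupp.single t 1 := by
  simp [diagMap, Finsupp.lsum_single, LinearMap.toSpanSingleton_apply, smul_smul]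

lemma relMap_single (e : U₁ ↪ U₂) (t : Finset U₁) :
    relMap K e (Finsupp.single t 1) = invSgn K e t • Finsupp.single (t.map e) 1 := by
  simp [relMap, Finsupp.lsum_single, LinearMap.toSpanSingleton_apply]

lemma relMap_eq (e : U₁ ↪ U₂) :
    relMap K e = (Finsupp.lmapDomain K K (Finset.map e)) ∘ₗ diagMap K (⇑e) := by
  refine Finsupp.lhom_ext fun t a => ?_
  rw [LinearMap.comp_apply, diagMap_single]
  simp only [map_smul, Finsupp.lmapDomain_apply, Finsupp.mapDomain_single]
  have : (Finsupp.single t a : Finset U₁ →₀ K) = a • Finsupp.single t 1 := by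
    rw [Finsupp.smul_single, smul_eq_mul, mul_one]
  rw [this, map_smul, relMap_single, smul_smul, mul_comm]

lemma diagMap_invol (e : U₁ → U₂) (f : Finset U₁ →₀ K) :
    diagMap K e (diagMap K e f) = f := by
  induction f using Finsupp.induction_linear with
  | zero => simp
  | add a b ha hb => rw [map_add, map_add, ha, hb]
  | single t a =>
      rw [diagMap_single, map_smul, diagMap_single, one_mul, smul_smul]
      rw [show a * invSgn K e t * invSgn K e t = a * (invSgn K e t * invSgn K e t) by ring,
        invSgn_sq, mul_one, Finsupp.smul_single, smul_eq_mul, mul_one]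

lemma relMap_injective (e : U₁ ↪ U₂) : Function.Injective (relMap K e) := by
  have hli : Function.LeftInverse (diagMap K (⇑e)) (diagMap K (⇑e)) := diagMap_invol K (⇑e)
  have h1 : Function.Injective (Finsupp.lmapDomain K K (Finset.map e)) := by
    intro x y hxy
    exact Finsupp.mapDomain_injective (Finset.map_injective e) hxy
  rw [relMap_eq]
  intro x y hxy
  exact hli.injective (h1 hxy)

lemma relMap_comm (e : U₁ ↪ U₂) :
    bdry K U₂ ∘ₗ relMap K e = relMap K e ∘ₗ bdry K U₁ := by
  classical
  refine Finsupp.lhom_ext fun t a => ?_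
  have hred : ∀ (g : (Finset U₁ →₀ K) →ₗ[K] (Finset U₂ →₀ K)),
      g (Finsupp.single t a) = a • g (Finsupp.single t 1) := by
    intro g
    rw [show (Finsupp.single t a : Finset U₁ →₀ K) = a • Finsupp.single t 1 by
      rw [Finsupp.smul_single, smul_eq_mul, mul_one], map_smul]
  rw [hred, hred]
  congr 1
  rw [LinearMap.comp_apply, LinearMap.comp_apply, relMap_single, map_smul, bdry_single,
    bdry_single, map_sum, Finset.sum_map]
  rw [Finset.smul_sum]
  refine Finset.sum_congr rfl fun v hv => ?_
  rw [map_smul, relMap_single, smul_smul, smul_smul]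
  have hme : (t.map e).erase (e v) = (t.erase v).map e := (Finset.map_erase e t v).symm
  rw [hme]
  congr 1
  have hkey := invSgn_key K e.injective (v := v) (t' := t.erase v) (Finset.notMem_erase v t)
  rw [Finset.insert_erase hv] at hkey
  have : (⟨⇑e, e.injective⟩ : U₁ ↪ U₂) = e := by ext x; rfl
  rw [this] at hkey
  exact hkey

lemma map_relMap_fchains (e : U₁ ↪ U₂) {F₁ : Set (Finset U₁)} {F₂ : Set (Finset U₂)}
    (h : ∀ s : Finset U₂, s ∈ F₂ ↔ ∃ t ∈ F₁, s = t.map e) (n : ℤ) :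
    (fchains K F₁ n).map (relMap K e) = fchains K F₂ n := by
  classical
  apply le_antisymm
  · refine map_fchains_le K _ _ fun t ht hc => ?_
    rw [relMap_single]
    refine Submodule.smul_mem _ _ (single_mem_fchains K ((h _).2 ⟨t, ht, rfl⟩) ?_)
    rw [Finset.card_map]
    exact hc
  · rw [fchains, Submodule.span_le]
    rintro f ⟨s, hs, hc, rfl⟩
    obtain ⟨t, ht, rfl⟩ := (h s).1 hs
    rw [Finset.card_map] at hc
    refine ⟨invSgn K e t • Finsupp.single t 1,
      Submodule.smul_mem _ _ (single_mem_fchains K ht hc), ?_⟩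
    rw [map_smul, relMap_single, smul_smul, invSgn_sq, one_smul]

lemma rhd_relabel (e : U₁ ↪ U₂) (Δ₁ : SComplex U₁) (Δ₂ : SComplex U₂)
    (h : ∀ s : Finset U₂, s ∈ Δ₂.faces ↔ ∃ t ∈ Δ₁.faces, s = t.map e) (n : ℤ) :
    rhd K Δ₁ n = rhd K Δ₂ n := by
  classical
  have hch : ∀ m : ℤ, (Δ₁.chains K m).map (relMap K e) = Δ₂.chains K m := fun m =>
    map_relMap_fchains K e h m
  have hcomm := relMap_comm K e
  have hcp : ∀ x, bdry K U₂ (relMap K e x) = relMap K e (bdry K U₁ x) := fun x => by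
    have := congrArg (fun g => g x) hcomm
    simpa using this
  have hZ : (Δ₁.chains K n ⊓ LinearMap.ker (bdry K U₁)).map (relMap K e)
      = Δ₂.chains K n ⊓ LinearMap.ker (bdry K U₂) := by
    apply le_antisymm
    · rintro _ ⟨x, hx, rfl⟩
      rw [SetLike.mem_coe, Submodule.mem_inf] at hx
      rw [Submodule.mem_inf]
      refine ⟨hch n ▸ Submodule.mem_map_of_mem hx.1, LinearMap.mem_ker.2 ?_⟩
      rw [hcp, LinearMap.mem_ker.1 hx.2, map_zero]
    · rintro y hy
      rw [Submodule.mem_inf] at hy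
      obtain ⟨hy1, hy2⟩ := hy
      rw [← hch n] at hy1
      obtain ⟨x, hx, rfl⟩ := hy1
      refine Submodule.mem_map_of_mem (Submodule.mem_inf.2 ⟨hx, LinearMap.mem_ker.2 ?_⟩)
      refine relMap_injective K e ?_
      rw [← hcp, LinearMap.mem_ker.1 hy2, map_zero]
  have hB : ((Δ₁.chains K (n + 1)).map (bdry K U₁)).map (relMap K e)
      = (Δ₂.chains K (n + 1)).map (bdry K U₂) := by
    rw [← Submodule.map_comp, ← hcomm, Submodule.map_comp, hch]
  have f1 : Module.finrank K ↥(Δ₂.chains K n ⊓ LinearMap.ker (bdry K U₂))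
      = Module.finrank K ↥(Δ₁.chains K n ⊓ LinearMap.ker (bdry K U₁)) := by
    rw [← hZ]
    exact ((Submodule.equivMapOfInjective _ (relMap_injective K e) _).finrank_eq).symm
  have f2 : Module.finrank K ((Δ₂.chains K (n + 1)).map (bdry K U₂))
      = Module.finrank K ((Δ₁.chains K (n + 1)).map (bdry K U₁)) := by
    rw [← hB]
    exact ((Submodule.equivMapOfInjective _ (relMap_injective K e) _).finrank_eq).symm
  rw [rhd, rhd, f1, f2]

end RelabelMap

section Hochster

variable {U : Type*}

lemma rhd_eq_zero_of_lt (Δ : SComplex U) {m : ℤ} (hm : m < -1) : rhd K Δ m = 0 := by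
  have h1 : Δ.chains K m = ⊥ := by
    rw [chains_eq_fchains]
    exact fchains_eq_bot K (by omega)
  rw [rhd, h1, bot_inf_eq]
  simp

lemma rhd_restrict_empty (Δ : SComplex U) (hemp : ∅ ∈ Δ.faces) :
    rhd K (Δ.restrict (∅ : Finset U)) (-1) = 1 := by
  classical
  have hfaces : (Δ.restrict (∅ : Finset U)).faces = {(∅ : Finset U)} := by
    ext s
    constructor
    · rintro ⟨hs, hsub⟩
      simp [Finset.subset_empty.1 hsub]
    · rintro rfl
      exact ⟨hemp, Finset.Subset.refl _⟩
  have hZ : (Δ.restrict (∅ : Finset U)).chains K (-1) = Submodule.span K {Finsupp.single ∅ (1 : K)} := by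
    rw [chains_eq_fchains, fchains]
    congr 1
    ext f
    simp only [Set.mem_setOf_eq, hfaces, Set.mem_singleton_iff]
    constructor
    · rintro ⟨s, rfl, _, rfl⟩; rfl
    · rintro rfl; exact ⟨∅, rfl, by simp, rfl⟩
  have hB : (Δ.restrict (∅ : Finset U)).chains K (-1 + 1) = ⊥ := by
    rw [chains_eq_fchains, fchains, Submodule.span_eq_bot]
    rintro f ⟨s, hs, hc, rfl⟩
    rw [hfaces] at hs
    simp only [Set.mem_singleton_iff] at hs
    subst hs
    simp at hc
  have hker : Finsupp.single ∅ (1 : K) ∈ LinearMap.ker (bdry K U) := by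
    rw [LinearMap.mem_ker, bdry_single]
    simp
  rw [rhd, hZ, hB, Submodule.map_bot, inf_eq_left.2 (by
    rw [Submodule.span_le, Set.singleton_subset_iff]; exact hker)]
  rw [finrank_span_singleton (by simp [Finsupp.single_eq_zero])]
  simp

variable [Fintype U]

lemma totalBetti_eq_sum_powerset (Δ : SComplex U) (hvert : Δ.vertexFinset = Finset.univ)
    (i : ℤ) :
    totalBetti K Δ i
      = ∑ W ∈ (Finset.univ : Finset U).powerset,
          rhd K (Δ.restrict W) ((W.card : ℤ) - i - 1) := by
  classical
  rw [Finset.sum_powerset]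
  rw [totalBetti]
  have hcard : (Finset.univ : Finset U).card = Fintype.card U := Finset.card_univ
  rw [hcard]
  refine Finset.sum_congr rfl fun d hd => ?_
  rw [betti, if_neg (by omega), hvert]
  have htn : ((d : ℤ)).toNat = d := Int.toNat_natCast d
  rw [htn]
  refine Finset.sum_congr rfl fun W hW => ?_
  have := (Finset.mem_powersetCard.1 hW).2
  rw [this]

lemma totalBetti_eq_zero_of_big (Δ : SComplex U) {i : ℤ} (hi : (Fintype.card U : ℤ) < i) :
    totalBetti K Δ i = 0 := by
  rw [totalBetti]
  refine Finset.sum_eq_zero fun d hd => ?_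
  rw [Finset.mem_range] at hd
  rw [betti]
  split
  · rfl
  · refine Finset.sum_eq_zero fun W hW => ?_
    refine rhd_eq_zero_of_lt K _ ?_
    omega

end Hochster

section Graph

variable {V : Type*}

lemma indep_vertexFinset [Fintype V] (G : SimpleGraph V) :
    (indepComplex G).vertexFinset = Finset.univ := by
  refine Finset.eq_univ_iff_forall.2 fun u => ?_
  rw [vertexFinset, Set.Finite.mem_toFinset]
  intro a ha b hb
  simp only [Finset.mem_singleton] at ha hb
  subst ha; subst hb
  exact fun h => G.irrefl h

lemma empty_indep (G : SimpleGraph V) : (∅ : Finset V) ∈ (indepComplex G).faces := by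
  intro a ha
  simp at ha

lemma totalBettiG_zero_ne [Fintype V] (G : SimpleGraph V) : totalBettiG K G 0 ≠ 0 := by
  classical
  have h00 : betti K (indepComplex G) 0 0 = 1 := by
    rw [betti, if_neg (by omega)]
    rw [show (0 : ℤ).toNat = 0 from rfl, Finset.powersetCard_zero, Finset.sum_singleton]
    rw [show (0 - 0 - 1 : ℤ) = -1 by norm_num]
    exact rhd_restrict_empty K _ (empty_indep G)
  intro h
  rw [totalBettiG, totalBetti] at h
  have h0 := Finset.sum_eq_zero_iff.1 h 0 (Finset.mem_range.2 (Nat.succ_pos _))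
  rw [Nat.cast_zero, h00] at h0
  exact one_ne_zero h0

lemma totalBettiG_big [Fintype V] (G : SimpleGraph V) {i : ℤ}
    (hi : (Fintype.card V : ℤ) < i) : totalBettiG K G i = 0 :=
  totalBetti_eq_zero_of_big K _ hi

lemma pdG_spec [Fintype V] (G : SimpleGraph V) :
    totalBettiG K G (pdG K G) ≠ 0 ∧ ∀ j : ℤ, (pdG K G : ℤ) < j → totalBettiG K G j = 0 := by
  classical
  set S := {i : ℕ | totalBetti K (indepComplex G) (i : ℤ) ≠ 0} with hS
  have hne : S.Nonempty := ⟨0, by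
    simp only [hS, Set.mem_setOf_eq, Nat.cast_zero]
    exact totalBettiG_zero_ne K G⟩
  have hbdd : BddAbove S := by
    refine ⟨Fintype.card V, fun i hi => ?_⟩
    by_contra hlt
    push_neg at hlt
    exact hi (totalBettiG_big K G (by exact_mod_cast hlt))
  have hmem : sSup S ∈ S := Nat.sSup_mem hne hbdd
  have hpd : pdG K G = sSup S := rfl
  refine ⟨by rw [hpd]; exact hmem, fun j hj => ?_⟩
  by_cases hbig : (Fintype.card V : ℤ) < j
  · exact totalBettiG_big K G hbig
  · have hj0 : 0 ≤ j := le_trans (Int.natCast_nonneg _) hj.le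
    obtain ⟨m, rfl⟩ : ∃ m : ℕ, j = (m : ℤ) := ⟨j.toNat, (Int.toNat_of_nonneg hj0).symm⟩
    have hm : sSup S < m := by exact_mod_cast hj
    by_contra hne'
    have : m ∈ S := hne'
    exact absurd (le_csSup hbdd this) (not_le.2 hm)

lemma rhd_restrict_induce [DecidableEq V] (G : SimpleGraph V) (P : Set V)
    [DecidablePred (· ∈ P)] (W' : Finset P) (m : ℤ) :
    rhd K ((indepComplex (G.induce P)).restrict W') m
      = rhd K ((indepComplex G).restrict (W'.map (Function.Embedding.subtype _))) m := by
  classical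
  refine rhd_relabel K (Function.Embedding.subtype _) _ _ (fun s => ?_) m
  constructor
  · rintro ⟨hind, hsub⟩
    have hs : ∀ x ∈ s, x ∈ P := by
      intro x hx
      obtain ⟨a, _, rfl⟩ := Finset.mem_map.1 (hsub hx)
      exact a.2
    refine ⟨s.subtype (· ∈ P), ⟨?_, ?_⟩, ?_⟩
    · intro a ha b hb hAdj
      rw [Finset.mem_subtype] at ha hb
      exact hind _ ha _ hb hAdj
    · intro a ha
      rw [Finset.mem_subtype] at ha
      obtain ⟨b, hb, hba⟩ := Finset.mem_map.1 (hsub ha)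
      have : b = a := Subtype.ext hba
      rwa [← this]
    · rw [Finset.subtype_map, Finset.filter_true_of_mem hs]
  · rintro ⟨t, ⟨hind, hsub⟩, rfl⟩
    constructor
    · intro x hx y hy hAdj
      obtain ⟨a, ha, rfl⟩ := Finset.mem_map.1 hx
      obtain ⟨b, hb, rfl⟩ := Finset.mem_map.1 hy
      exact hind a ha b hb hAdj
    · exact Finset.map_subset_map.2 hsub

lemma totalBettiG_induce_eq_sum [Fintype V] [DecidableEq V] (G : SimpleGraph V) (P : Set V)
    [DecidablePred (· ∈ P)] (j : ℤ) :
    totalBettiG K (G.induce P) j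
      = ∑ W ∈ (Finset.univ.filter (· ∈ P)).powerset,
          rhd K ((indepComplex G).restrict W) ((W.card : ℤ) - j - 1) := by
  classical
  rw [totalBettiG, totalBetti_eq_sum_powerset K _ (indep_vertexFinset _)]
  refine Finset.sum_nbij' (i := fun W' => W'.map (Function.Embedding.subtype _))
    (j := fun W => W.subtype (· ∈ P)) ?_ ?_ ?_ ?_ ?_
  · intro W' _
    rw [Finset.mem_powerset]
    intro x hx
    obtain ⟨a, _, rfl⟩ := Finset.mem_map.1 hx
    simp [a.2]
  · intro W _
    simp
  · intro W' _
    ext a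
    simp
  · intro W hW
    rw [Finset.mem_powerset] at hW
    show (W.subtype (· ∈ P)).map (Function.Embedding.subtype _) = W
    rw [Finset.subtype_map, Finset.filter_true_of_mem]
    intro x hx
    have := hW hx
    simp only [Finset.mem_filter] at this
    exact this.2
  · intro W' _
    rw [Finset.card_map]
    exact (rhd_restrict_induce K G P W' _)

end Graph

end Skel

open Skel in
/-- Behaviour of the top total Betti number of a forest under the recursion:
with `T'`, `T''`, `n = deg v` as in the recursive setup, `β_{pd(T)}(T)` equals
`β_{pd(T')}(T')`, `β_{pd(T'')}(T'')`, or their sum, according to the comparison of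
`pd(T')` with `n + pd(T'')`. -/
theorem top_betti_forest_recursion {V : Type*} [Fintype V] [DecidableEq V] (K : Type*) [Field K]
    (T : SimpleGraph V) [DecidableRel T.Adj] (hT : T.IsAcyclic)
    (v v₁ w : V) (hadj : T.Adj v v₁) (hw : T.Adj v w) (hne : v₁ ≠ w)
    (hleaf : ∀ u : V, T.Adj v u → u ≠ w → T.degree u = 1) :
    (pdG K (T.induce {u : V | u ≠ v₁})
        > T.degree v + pdG K (T.induce {u : V | u ≠ v ∧ ¬ T.Adj v u}) →
      totalBettiG K T (pdG K T)
        = totalBettiG K (T.induce {u : V | u ≠ v₁}) (pdG K (T.induce {u : V | u ≠ v₁})))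
    ∧ (pdG K (T.induce {u : V | u ≠ v₁})
        < T.degree v + pdG K (T.induce {u : V | u ≠ v ∧ ¬ T.Adj v u}) →
      totalBettiG K T (pdG K T)
        = totalBettiG K (T.induce {u : V | u ≠ v ∧ ¬ T.Adj v u})
            (pdG K (T.induce {u : V | u ≠ v ∧ ¬ T.Adj v u})))
    ∧ (pdG K (T.induce {u : V | u ≠ v₁})
        = T.degree v + pdG K (T.induce {u : V | u ≠ v ∧ ¬ T.Adj v u}) →
      totalBettiG K T (pdG K T)
        = totalBettiG K (T.induce {u : V | u ≠ v₁}) (pdG K (T.induce {u : V | u ≠ v₁}))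
          + totalBettiG K (T.induce {u : V | u ≠ v ∧ ¬ T.Adj v u})
              (pdG K (T.induce {u : V | u ≠ v ∧ ¬ T.Adj v u}))) := by
  classical
  -- the only neighbour of the leaf `v₁` is `v`
  have hnbr : ∀ u : V, T.Adj v₁ u → u = v := by
    intro u hu
    have hdeg1 : T.degree v₁ = 1 := hleaf v₁ hadj hne
    have hvmem : v ∈ T.neighborFinset v₁ := (T.mem_neighborFinset v₁ v).2 hadj.symm
    obtain ⟨a, ha⟩ := Finset.card_eq_one.1 hdeg1
    rw [ha, Finset.mem_singleton] at hvmem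
    have humem : u ∈ T.neighborFinset v₁ := (T.mem_neighborFinset v₁ u).2 hu
    rw [ha, Finset.mem_singleton] at humem
    rw [humem, hvmem]
  have hvne : v ≠ v₁ := fun h => T.irrefl (h ▸ hadj)
  set N := T.neighborFinset v with hNdef
  have hv₁N : v₁ ∈ N := (T.mem_neighborFinset v v₁).2 hadj
  set X := N.erase v₁ with hXdef
  set P1 : Set V := {u : V | u ≠ v₁} with hP1
  set P2 : Set V := {u : V | u ≠ v ∧ ¬ T.Adj v u} with hP2
  set M : Finset V := Finset.univ.filter (· ∈ P2) with hMdef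
  have hMmem : ∀ u : V, u ∈ M ↔ (u ≠ v ∧ ¬ T.Adj v u) := by
    intro u
    simp [hMdef, hP2]
  have hXmem : ∀ u : V, u ∈ X ↔ (u ≠ v₁ ∧ T.Adj v u) := by
    intro u
    simp [hXdef, hNdef]
  have hvX : v ∉ X := fun h => T.irrefl ((hXmem v).1 h).2
  have hv₁X : v₁ ∉ X := fun h => ((hXmem v₁).1 h).1 rfl
  have hvM : v ∉ M := fun h => ((hMmem v).1 h).1 rfl
  have hv₁M : v₁ ∉ M := fun h => ((hMmem v₁).1 h).2 hadj
  have hXM : ∀ u : V, u ∈ X → u ∉ M := fun u hx hm => ((hMmem u).1 hm).2 ((hXmem u).1 hx).2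
  set R : ℤ → Finset V → ℕ :=
    fun i W => rhd K ((indepComplex T).restrict W) ((W.card : ℤ) - i - 1) with hRdef
  have hr1 : ∀ i : ℤ, totalBettiG K T i = ∑ W ∈ (Finset.univ : Finset V).powerset, R i W :=
    fun i => totalBetti_eq_sum_powerset K _ (indep_vertexFinset T) i
  have hAsum : ∀ j : ℤ, totalBettiG K (T.induce P1) j
      = ∑ W ∈ (Finset.univ.erase v₁).powerset, R j W := by
    intro j
    rw [totalBettiG_induce_eq_sum K T P1 j]
    refine Finset.sum_congr ?_ fun _ _ => rfl
    congr 1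
    ext u
    simp [hP1, Finset.mem_erase, and_comm]
  have hBsum : ∀ j : ℤ, totalBettiG K (T.induce P2) j = ∑ W ∈ M.powerset, R j W := by
    intro j
    rw [totalBettiG_induce_eq_sum K T P2 j]
  -- the cone bucket : `v₁ ∈ W`, `v ∉ W`
  have hzero : ∀ W : Finset V, v₁ ∈ W → v ∉ W → ∀ i : ℤ, R i W = 0 := by
    intro W hv₁W hvW i
    refine rhd_cone K _ (x := v₁) ?_ _
    rintro s ⟨hs1, hs2⟩
    refine ⟨?_, Finset.insert_subset hv₁W hs2⟩
    intro a ha b hb hab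
    rcases Finset.mem_insert.1 ha with rfl | ha'
    · rcases Finset.mem_insert.1 hb with rfl | hb'
      · exact T.irrefl hab
      · exact hvW ((hnbr b hab) ▸ (hs2 hb'))
    · rcases Finset.mem_insert.1 hb with rfl | hb'
      · exact hvW ((hnbr a hab.symm) ▸ (hs2 ha'))
      · exact hs1 a ha' b hb' hab
  -- the main bucket : `v, v₁ ∈ W`
  have hleafW : ∀ W : Finset V, v ∈ W → v₁ ∈ W → ∀ i : ℤ,
      R i W = rhd K ((indepComplex T).restrict (W ∩ M)) ((W.card : ℤ) - i - 1 - 1) := by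
    intro W hvW hv₁W i
    refine rhd_leaf K _ _ (p := v) (u := v₁) hvne ?_ ?_ ?_ _
    · rintro s ⟨hs1, hs2⟩ hvs
      refine ⟨?_, Finset.insert_subset hv₁W hs2⟩
      intro a ha b hb hab
      rcases Finset.mem_insert.1 ha with rfl | ha'
      · rcases Finset.mem_insert.1 hb with rfl | hb'
        · exact T.irrefl hab
        · exact hvs ((hnbr b hab) ▸ hb')
      · rcases Finset.mem_insert.1 hb with rfl | hb'
        · exact hvs ((hnbr a hab.symm) ▸ ha')
        · exact hs1 a ha' b hb' hab
    · intro s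
      constructor
      · rintro ⟨hs1, hs2⟩
        have hsM : ∀ a ∈ s, a ∈ M := fun a ha => (Finset.mem_inter.1 (hs2 ha)).2
        have hvs : v ∉ s := fun h => ((hMmem v).1 (hsM v h)).1 rfl
        refine ⟨hvs, ?_, ?_⟩
        · intro a ha b hb hab
          rcases Finset.mem_insert.1 ha with rfl | ha'
          · rcases Finset.mem_insert.1 hb with rfl | hb'
            · exact T.irrefl hab
            · exact ((hMmem b).1 (hsM b hb')).2 hab
          · rcases Finset.mem_insert.1 hb with rfl | hb'
            · exact ((hMmem a).1 (hsM a ha')).2 hab.symm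
            · exact hs1 a ha' b hb' hab
        · exact Finset.insert_subset hvW (fun a ha => (Finset.mem_inter.1 (hs2 ha)).1)
      · rintro ⟨hvs, hind, hsub⟩
        refine ⟨?_, ?_⟩
        · intro a ha b hb hab
          exact hind a (Finset.mem_insert_of_mem ha) b (Finset.mem_insert_of_mem hb) hab
        · intro a ha
          refine Finset.mem_inter.2 ⟨hsub (Finset.mem_insert_of_mem ha), ?_⟩
          refine (hMmem a).2 ⟨fun h => hvs (h ▸ ha), fun h => ?_⟩
          exact hind v (Finset.mem_insert_self v s) a (Finset.mem_insert_of_mem ha) h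
    · rintro s ⟨hs1, hs2⟩ hveq
      exact hv₁M (Finset.mem_inter.1 (hs2 hveq)).2
  -- cardinality decomposition for `v, v₁ ∈ W`
  have hWeq : ∀ W : Finset V, v ∈ W → v₁ ∈ W →
      W = insert v (insert v₁ ((W ∩ X) ∪ (W ∩ M))) := by
    intro W hvW hv₁W
    ext u
    simp only [Finset.mem_insert, Finset.mem_union, Finset.mem_inter]
    constructor
    · intro hu
      by_cases h1 : u = v
      · exact Or.inl h1
      by_cases h2 : u = v₁
      · exact Or.inr (Or.inl h2)
      by_cases h3 : T.Adj v u
      · exact Or.inr (Or.inr (Or.inl ⟨hu, (hXmem u).2 ⟨h2, h3⟩⟩))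
      · exact Or.inr (Or.inr (Or.inr ⟨hu, (hMmem u).2 ⟨h1, h3⟩⟩))
    · rintro (rfl | rfl | ⟨h, _⟩ | ⟨h, _⟩) <;> first | exact hvW | exact hv₁W | exact h
  have hcardW : ∀ W : Finset V, v ∈ W → v₁ ∈ W →
      W.card = (W ∩ X).card + (W ∩ M).card + 2 := by
    intro W hvW hv₁W
    conv_lhs => rw [hWeq W hvW hv₁W]
    rw [Finset.card_insert_of_notMem (by
      intro h
      rcases Finset.mem_insert.1 h with h | h
      · exact hvne h
      rcases Finset.mem_union.1 h with h | h
      · exact hvX (Finset.mem_inter.1 h).2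
      · exact hvM (Finset.mem_inter.1 h).2)]
    rw [Finset.card_insert_of_notMem (by
      intro h
      rcases Finset.mem_union.1 h with h | h
      · exact hv₁X (Finset.mem_inter.1 h).2
      · exact hv₁M (Finset.mem_inter.1 h).2)]
    rw [Finset.card_union_of_disjoint (Finset.disjoint_left.2
      (fun a ha hb => hXM a (Finset.mem_inter.1 ha).2 (Finset.mem_inter.1 hb).2))]
    all_goals omega
  -- the recursion
  have hrecur : ∀ i : ℤ, totalBettiG K T i
      = totalBettiG K (T.induce P1) i
        + ∑ S ∈ X.powerset, totalBettiG K (T.induce P2) (i - 1 - S.card) := by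
    intro i
    rw [hr1 i, ← Finset.sum_filter_add_sum_filter_not
      ((Finset.univ : Finset V).powerset) (fun W => v₁ ∈ W) (R i)]
    have e1 : ∑ W ∈ (Finset.univ : Finset V).powerset.filter (fun W => ¬ v₁ ∈ W), R i W
        = totalBettiG K (T.induce P1) i := by
      rw [hAsum i]
      refine Finset.sum_congr ?_ fun _ _ => rfl
      ext W
      simp only [Finset.mem_filter, Finset.mem_powerset]
      rw [Finset.subset_erase]
      all_goals tauto
    have e2 : ∑ W ∈ (Finset.univ : Finset V).powerset.filter (fun W => v₁ ∈ W), R i W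
        = ∑ S ∈ X.powerset, totalBettiG K (T.induce P2) (i - 1 - S.card) := by
      rw [← Finset.sum_filter_add_sum_filter_not
        (((Finset.univ : Finset V).powerset.filter (fun W => v₁ ∈ W))) (fun W => v ∈ W) (R i)]
      have e3 : ∑ W ∈ ((Finset.univ : Finset V).powerset.filter
            (fun W => v₁ ∈ W)).filter (fun W => ¬ v ∈ W), R i W = 0 := by
        refine Finset.sum_eq_zero fun W hW => ?_
        simp only [Finset.mem_filter] at hW
        exact hzero W hW.1.2 hW.2 i
      rw [e3, add_zero]
      have e4 : ∀ W ∈ ((Finset.univ : Finset V).powerset.filter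
            (fun W => v₁ ∈ W)).filter (fun W => v ∈ W),
          R i W = rhd K ((indepComplex T).restrict (W ∩ M))
            (((W ∩ M).card : ℤ) - (i - 1 - (W ∩ X).card) - 1) := by
        intro W hW
        simp only [Finset.mem_filter] at hW
        rw [hleafW W hW.2 hW.1.2 i]
        congr 1
        have := hcardW W hW.2 hW.1.2
        omega
      rw [Finset.sum_congr rfl e4]
      rw [Finset.sum_nbij' (i := fun W => (W ∩ X, W ∩ M))
        (j := fun q : Finset V × Finset V => insert v (insert v₁ (q.1 ∪ q.2)))
        (t := X.powerset ×ˢ M.powerset)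
        (g := fun q : Finset V × Finset V =>
          rhd K ((indepComplex T).restrict q.2) ((q.2.card : ℤ) - (i - 1 - q.1.card) - 1))
        ?_ ?_ ?_ ?_ ?_]
      · rw [Finset.sum_product]
        refine Finset.sum_congr rfl fun S hS => ?_
        rw [hBsum]
      · intro W hW
        simp only [Finset.mem_product, Finset.mem_powerset]
        exact ⟨Finset.inter_subset_right, Finset.inter_subset_right⟩
      · intro q hq
        simp only [Finset.mem_product, Finset.mem_powerset] at hq
        simp only [Finset.mem_filter, Finset.mem_powerset]
        refine ⟨⟨Finset.subset_univ _, ?_⟩, Finset.mem_insert_self v _⟩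
        exact Finset.mem_insert_of_mem (Finset.mem_insert_self v₁ _)
      · intro W hW
        simp only [Finset.mem_filter] at hW
        exact (hWeq W hW.2 hW.1.2).symm
      · intro q hq
        simp only [Finset.mem_product, Finset.mem_powerset] at hq
        obtain ⟨hq1, hq2⟩ := hq
        have hXpart : insert v (insert v₁ (q.1 ∪ q.2)) ∩ X = q.1 := by
          ext u
          simp only [Finset.mem_inter, Finset.mem_insert, Finset.mem_union]
          constructor
          · rintro ⟨rfl | rfl | hu | hu, hX⟩
            · exact absurd hX hvX
            · exact absurd hX hv₁X
            · exact hu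
            · exact absurd (hq2 hu) (hXM u hX)
          · intro hu
            exact ⟨Or.inr (Or.inr (Or.inl hu)), hq1 hu⟩
        have hMpart : insert v (insert v₁ (q.1 ∪ q.2)) ∩ M = q.2 := by
          ext u
          simp only [Finset.mem_inter, Finset.mem_insert, Finset.mem_union]
          constructor
          · rintro ⟨rfl | rfl | hu | hu, hM⟩
            · exact absurd hM hvM
            · exact absurd hM hv₁M
            · exact absurd hM (hXM u (hq1 hu))
            · exact hu
          · intro hu
            exact ⟨Or.inr (Or.inr (Or.inr hu)), hq2 hu⟩
        exact Prod.ext hXpart hMpart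
      · intro W hW
        rfl
    rw [e1, e2]
    ring
  -- properties of the projective dimensions of T' and T''
  obtain ⟨hA0, hAvan⟩ := pdG_spec K (T.induce P1)
  obtain ⟨hB0, hBvan⟩ := pdG_spec K (T.induce P2)
  set p' := pdG K (T.induce P1) with hp'
  set p'' := pdG K (T.induce P2) with hp''
  set n := T.degree v with hn
  have hXn : X.card + 1 = n := by
    have h1 : X.card = N.card - 1 := Finset.card_erase_of_mem hv₁N
    have h2 : 1 ≤ N.card := Finset.card_pos.2 ⟨v₁, hv₁N⟩
    have h3 : T.degree v = N.card := rfl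
    omega
  have hTop : ∀ c : ℕ, (∀ j : ℤ, (c : ℤ) < j → totalBettiG K T j = 0) →
      totalBettiG K T (c : ℤ) ≠ 0 → pdG K T = c := by
    intro c hvan hne0
    have hbdd : BddAbove {i : ℕ | totalBetti K (indepComplex T) (i : ℤ) ≠ 0} := by
      refine ⟨c, fun i hi => ?_⟩
      by_contra hlt
      push_neg at hlt
      exact hi (hvan i (by exact_mod_cast hlt))
    refine le_antisymm ?_ ?_
    · refine csSup_le ⟨c, hne0⟩ fun i hi => ?_
      by_contra hlt
      push_neg at hlt
      exact hi (hvan i (by exact_mod_cast hlt))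
    · exact le_csSup hbdd hne0
  have hScard : ∀ S ∈ X.powerset, S.card ≤ X.card := fun S hS =>
    Finset.card_le_card (Finset.mem_powerset.1 hS)
  refine ⟨?_, ?_, ?_⟩
  · -- case p' > n + p''
    intro hgt
    have hvan : ∀ j : ℤ, (p' : ℤ) < j → totalBettiG K T j = 0 := by
      intro j hj
      rw [hrecur j, hAvan j hj, zero_add]
      refine Finset.sum_eq_zero fun S hS => ?_
      refine hBvan _ ?_
      have := hScard S hS
      push_cast
      omega
    have hval : totalBettiG K T (p' : ℤ) = totalBettiG K (T.induce P1) (p' : ℤ) := by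
      rw [hrecur (p' : ℤ)]
      have hz : ∑ S ∈ X.powerset, totalBettiG K (T.induce P2) ((p' : ℤ) - 1 - S.card) = 0 := by
        refine Finset.sum_eq_zero fun S hS => ?_
        refine hBvan _ ?_
        have := hScard S hS
        push_cast
        omega
      rw [hz, add_zero]
    rw [hTop p' hvan (by rw [hval]; exact hA0)]
    exact hval
  · -- case p' < n + p''
    intro hlt
    have hvan : ∀ j : ℤ, ((n + p'' : ℕ) : ℤ) < j → totalBettiG K T j = 0 := by
      intro j hj
      push_cast at hj
      rw [hrecur j, hAvan j (by push_cast; omega), zero_add]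
      refine Finset.sum_eq_zero fun S hS => ?_
      refine hBvan _ ?_
      have := hScard S hS
      push_cast
      omega
    have hval : totalBettiG K T ((n + p'' : ℕ) : ℤ)
        = totalBettiG K (T.induce P2) (p'' : ℤ) := by
      rw [hrecur _]
      rw [hAvan _ (by push_cast; omega), zero_add]
      rw [Finset.sum_eq_single_of_mem X (Finset.mem_powerset_self X) (fun S hS hSne => ?_)]
      · congr 1
        push_cast
        omega
      · refine hBvan _ ?_
        have hss : S ⊂ X := Finset.ssubset_iff_subset_ne.2 ⟨Finset.mem_powerset.1 hS, hSne⟩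
        have := Finset.card_lt_card hss
        push_cast
        omega
    rw [hTop (n + p'') hvan (by rw [hval]; exact hB0)]
    exact hval
  · -- case p' = n + p''
    intro heq
    have hvan : ∀ j : ℤ, (p' : ℤ) < j → totalBettiG K T j = 0 := by
      intro j hj
      rw [hrecur j, hAvan j hj, zero_add]
      refine Finset.sum_eq_zero fun S hS => ?_
      refine hBvan _ ?_
      have := hScard S hS
      push_cast
      omega
    have hval : totalBettiG K T (p' : ℤ)
        = totalBettiG K (T.induce P1) (p' : ℤ) + totalBettiG K (T.induce P2) (p'' : ℤ) := by
      rw [hrecur _]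
      congr 1
      rw [Finset.sum_eq_single_of_mem X (Finset.mem_powerset_self X) (fun S hS hSne => ?_)]
      · congr 1
        push_cast
        omega
      · refine hBvan _ ?_
        have hss : S ⊂ X := Finset.ssubset_iff_subset_ne.2 ⟨Finset.mem_powerset.1 hS, hSne⟩
        have := Finset.card_lt_card hss
        push_cast
        omega
    have hne0 : totalBettiG K T (p' : ℤ) ≠ 0 := by
      rw [hval]
      intro h
      exact hA0 (Nat.eq_zero_of_add_eq_zero_right h)
    rw [hTop p' hvan hne0]
    exact hval
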